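/- Let a, b, c ∈ ℂ, let G(a,b,c) = {(1,0), (a,1), (b,1), (c,1)} ⊆ ℂ², and let Θ ⊆ 𝕋 have exactly four elements. Then G(a,b,c) fails Θ-PR in ℂ² if and only if a = b, or b = c, or a = c, or there exists an ordering (θ_1, θ_2, θ_3, θ_4) of the four elements of Θ such that (c − a)/(b − a) equals the complex conjugate of CR(θ_1, θ_2; θ_3, θ_4). -/

import Mathlib

open MeasureTheory Set

noncomputable section

/-- The unit circle in the complex plane. -/
def unitCircle : Set ℂ := {z : ℂ | ‖z‖ = 1}

/-- `G` does `Θ`-PR in `H`.  The paper inner product `⟨f,g⟩` (linear in the first argument)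
corresponds to Mathlib's `inner g f` (which is linear in the second argument). -/
def DoesPR {H : Type*} [NormedAddCommGroup H] [InnerProductSpace ℂ H]
    (G : Set H) (Θ : Set ℂ) : Prop :=
  ∀ f h : H, (∀ g ∈ G, ∃ θ ∈ Θ, (inner ℂ g f : ℂ) = θ * (inner ℂ g h : ℂ)) →
    ∃ θ ∈ Θ, f = θ • h

/-- The vector `(x, y)` in `ℂ²`. -/
def vec2 (x y : ℂ) : EuclideanSpace ℂ (Fin 2) := WithLp.toLp 2 ![x, y]

/-- The system `G(a,b,c) = {(1,0), (a,1), (b,1), (c,1)} ⊆ ℂ²`. -/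
def Gabc (a b c : ℂ) : Set (EuclideanSpace ℂ (Fin 2)) :=
  {vec2 1 0, vec2 a 1, vec2 b 1, vec2 c 1}

/-- The cross ratio of four complex numbers. -/
def crossRatio (z₁ z₂ z₃ z₄ : ℂ) : ℂ :=
  ((z₁ - z₃) * (z₂ - z₄)) / ((z₁ - z₄) * (z₂ - z₃))

lemma inner_vec2 (x y : ℂ) (f : EuclideanSpace ℂ (Fin 2)) :
    (inner ℂ (vec2 x y) f : ℂ) = starRingEnd ℂ x * f 0 + starRingEnd ℂ y * f 1 := by
  simp [vec2, PiLp.inner_apply, Fin.sum_univ_two, RCLike.inner_apply, mul_comm]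

lemma smul_coords (θ : ℂ) (g : EuclideanSpace ℂ (Fin 2)) (i : Fin 2) :
    (θ • g) i = θ * g i := rfl

lemma ext2 (f g : EuclideanSpace ℂ (Fin 2)) (h0 : f 0 = g 0) (h1 : f 1 = g 1) : f = g := by
  ext i; fin_cases i <;> assumption

/-- Characterization of failure of PR for `Gabc` in terms of a Möbius-type condition. -/
lemma notPR_iff (a b c : ℂ) (Θ : Set ℂ) :
    ¬ DoesPR (Gabc a b c) Θ ↔ ∃ α ∈ Θ, ∃ s t : ℂ, t ≠ α * s ∧
      ∀ x ∈ ({a, b, c} : Set ℂ), ∃ θ ∈ Θ,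
        α * starRingEnd ℂ x + t = θ * (starRingEnd ℂ x + s) := by
  unfold DoesPR
  push_neg
  constructor
  · rintro ⟨f, h, hK, hnot⟩
    obtain ⟨θ₀, hθ₀, h0eq⟩ := hK (vec2 1 0) (Or.inl rfl)
    rw [inner_vec2, inner_vec2] at h0eq
    simp only [map_one, map_zero, one_mul, zero_mul, add_zero] at h0eq
    have hx : ∀ x ∈ ({a, b, c} : Set ℂ), ∃ θ ∈ Θ,
        starRingEnd ℂ x * f 0 + f 1 = θ * (starRingEnd ℂ x * h 0 + h 1) := by
      intro x hxm
      have hg : vec2 x 1 ∈ Gabc a b c := by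
        rcases hxm with rfl | rfl | rfl
        · exact Or.inr (Or.inl rfl)
        · exact Or.inr (Or.inr (Or.inl rfl))
        · exact Or.inr (Or.inr (Or.inr rfl))
      obtain ⟨θ, hθ, heq⟩ := hK _ hg
      rw [inner_vec2, inner_vec2] at heq
      simp only [map_one, one_mul] at heq
      exact ⟨θ, hθ, heq⟩
    obtain ⟨θa, hθa, haeq⟩ := hx a (Or.inl rfl)
    by_cases hh0 : h 0 = 0
    · exfalso
      by_cases hh1 : h 1 = 0
      · apply hnot θ₀ hθ₀
        have hf0 : f 0 = 0 := by rw [h0eq, hh0, mul_zero]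
        have hf1 : f 1 = 0 := by
          have := haeq
          rw [hh0, hh1, hf0] at this
          simpa using this
        exact ext2 _ _ (by rw [smul_coords, hf0, hh0, mul_zero])
          (by rw [smul_coords, hf1, hh1, mul_zero])
      · apply hnot θa hθa
        have hf0 : f 0 = 0 := by rw [h0eq, hh0, mul_zero]
        have hf1 : f 1 = θa * h 1 := by
          have := haeq
          rw [hh0, hf0] at this
          simpa using this
        exact ext2 _ _ (by rw [smul_coords, hf0, hh0, mul_zero]) (by rw [smul_coords, hf1])
    · refine ⟨θ₀, hθ₀, h 1 / h 0, f 1 / h 0, ?_, ?_⟩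
      · intro heq
        apply hnot θ₀ hθ₀
        have hf1 : f 1 = θ₀ * h 1 := by
          field_simp at heq
          linear_combination heq
        exact ext2 _ _ (by rw [smul_coords, h0eq]) (by rw [smul_coords, hf1])
      · intro x hxm
        obtain ⟨θ, hθ, heq⟩ := hx x hxm
        refine ⟨θ, hθ, ?_⟩
        field_simp
        linear_combination heq - starRingEnd ℂ x * h0eq
  · rintro ⟨α, hα, s, t, hts, hall⟩
    refine ⟨vec2 α t, vec2 1 s, ?_, ?_⟩
    · intro g hg
      rcases hg with rfl | rfl | rfl | rfl
      · refine ⟨α, hα, ?_⟩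
        rw [inner_vec2, inner_vec2]
        simp [vec2]
      · obtain ⟨θ, hθ, heq⟩ := hall a (Or.inl rfl)
        refine ⟨θ, hθ, ?_⟩
        rw [inner_vec2, inner_vec2]
        simp only [vec2, map_one, one_mul, Matrix.cons_val_zero, Matrix.cons_val_one,
          Matrix.head_cons]
        linear_combination heq
      · obtain ⟨θ, hθ, heq⟩ := hall b (Or.inr (Or.inl rfl))
        refine ⟨θ, hθ, ?_⟩
        rw [inner_vec2, inner_vec2]
        simp only [vec2, map_one, one_mul, Matrix.cons_val_zero, Matrix.cons_val_one,
          Matrix.head_cons]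
        linear_combination heq
      · obtain ⟨θ, hθ, heq⟩ := hall c (Or.inr (Or.inr rfl))
        refine ⟨θ, hθ, ?_⟩
        rw [inner_vec2, inner_vec2]
        simp only [vec2, map_one, one_mul, Matrix.cons_val_zero, Matrix.cons_val_one,
          Matrix.head_cons]
        linear_combination heq
    · intro θ hθ heq
      have h1 : (vec2 α t) 1 = (θ • vec2 1 s) 1 := by rw [heq]
      have h0 : (vec2 α t) 0 = (θ • vec2 1 s) 0 := by rw [heq]
      rw [smul_coords] at h0 h1
      simp only [vec2] at h0 h1
      apply hts
      have hα' : α = θ := by simpa using h0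
      simp only [PiLp.toLp_apply, Matrix.cons_val_one, Matrix.head_cons, Matrix.cons_val_zero] at h1
      rw [h1, hα']

/-- One-point degenerate construction. -/
lemma construct_one (α β P : ℂ) (hαβ : α ≠ β) :
    ∃ s t : ℂ, t ≠ α * s ∧ α * P + t = β * (P + s) := by
  refine ⟨1 - P, β - α * P, ?_, by ring⟩
  intro h
  apply hαβ
  linear_combination -h

/-- Two-point degenerate construction. -/
lemma construct_two (α β γ P Q : ℂ) (hαβ : α ≠ β) (hβγ : β ≠ γ) (hαγ : α ≠ γ)
    (hPQ : P ≠ Q) :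
    ∃ s t : ℂ, t ≠ α * s ∧ α * P + t = β * (P + s) ∧ α * Q + t = γ * (Q + s) := by
  have hβγ' : β - γ ≠ 0 := sub_ne_zero.mpr hβγ
  set s : ℂ := (α * (P - Q) - β * P + γ * Q) / (β - γ) with hs
  refine ⟨s, β * (P + s) - α * P, ?_, by ring, ?_⟩
  · have hPs : P + s = (α - γ) * (P - Q) / (β - γ) := by
      rw [hs]; field_simp; ring
    intro h
    have : (β - α) * (P + s) = 0 := by linear_combination h
    rw [hPs] at this
    have h1 : α - γ ≠ 0 := sub_ne_zero.mpr hαγ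
    have h2 : P - Q ≠ 0 := sub_ne_zero.mpr hPQ
    have h3 : β - α ≠ 0 := sub_ne_zero.mpr (Ne.symm hαβ)
    exact mul_ne_zero h3 (div_ne_zero (mul_ne_zero h1 h2) hβγ') this
  · rw [hs]; field_simp; ring

/-- Forward: the Möbius values formula gives the cross ratio. -/
lemma cr_formula (α s t A B C θa θb θc : ℂ) (hts : t ≠ α * s)
    (hA : α * A + t = θa * (A + s)) (hB : α * B + t = θb * (B + s))
    (hC : α * C + t = θc * (C + s))
    (hAB : A ≠ B) (hAC : A ≠ C) (hBC : B ≠ C) :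
    θa ≠ α ∧ θb ≠ α ∧ θc ≠ α ∧ θa ≠ θb ∧ θa ≠ θc ∧ θb ≠ θc ∧
      crossRatio θc θb θa α = (C - A) / (B - A) := by
  have hts' : t - α * s ≠ 0 := sub_ne_zero.mpr hts
  have hden : ∀ X θ : ℂ, α * X + t = θ * (X + s) → X + s ≠ 0 := by
    intro X θ hX h0
    apply hts
    rw [h0, mul_zero] at hX
    linear_combination hX - α * h0
  have hAs := hden A θa hA
  have hBs := hden B θb hB
  have hCs := hden C θc hC
  have hne : ∀ X θ : ℂ, α * X + t = θ * (X + s) → X + s ≠ 0 → θ ≠ α := by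
    intro X θ hX h0 hθ
    apply hts
    rw [hθ] at hX
    have : α * (X + s) - (α * X + t) = 0 := by rw [hX]; ring
    linear_combination -this
  have hθaα := hne A θa hA hAs
  have hθbα := hne B θb hB hBs
  have hθcα := hne C θc hC hCs
  have hdiff : ∀ X Y θ θ' : ℂ, α * X + t = θ * (X + s) → α * Y + t = θ' * (Y + s) →
      X ≠ Y → θ ≠ α → θ ≠ θ' := by
    intro X Y θ θ' hX hY hXY hθα hθθ'
    rw [← hθθ'] at hY
    apply hθα
    have hXY' : X - Y ≠ 0 := sub_ne_zero.mpr hXY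
    have key : (θ - α) * (X - Y) = 0 := by linear_combination hY - hX
    rcases mul_eq_zero.mp key with h | h
    · exact sub_eq_zero.mp h
    · exact absurd h hXY'
  refine ⟨hθaα, hθbα, hθcα, hdiff A B θa θb hA hB hAB hθaα,
    hdiff A C θa θc hA hC hAC hθaα, hdiff B C θb θc hB hC hBC hθbα, ?_⟩
  have eθa : θa = (α * A + t) / (A + s) := by rw [eq_div_iff hAs]; linear_combination -hA
  have eθb : θb = (α * B + t) / (B + s) := by rw [eq_div_iff hBs]; linear_combination -hB
  have eθc : θc = (α * C + t) / (C + s) := by rw [eq_div_iff hCs]; linear_combination -hC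
  have hBA : B - A ≠ 0 := sub_ne_zero.mpr (Ne.symm hAB)
  have h1 : θc - α = (t - α * s) / (C + s) := by
    rw [eθc]; field_simp; ring
  have h4 : θb - α = (t - α * s) / (B + s) := by
    rw [eθb]; field_simp; ring
  have h2 : θb - θa = ((α * s - t) * (B - A)) / ((B + s) * (A + s)) := by
    rw [eθb, eθa]; field_simp; ring
  have h3 : θc - θa = ((α * s - t) * (C - A)) / ((C + s) * (A + s)) := by
    rw [eθc, eθa]; field_simp; ring
  have hst : α * s - t ≠ 0 := fun h => hts' (by linear_combination -h)
  rw [crossRatio, h1, h2, h3, h4]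
  field_simp

/-- Backward: construct the Möbius data from the cross-ratio identity. -/
lemma construct_cr (θ₁ θ₂ θ₃ θ₄ A B C : ℂ)
    (h14 : θ₁ ≠ θ₄) (h23 : θ₂ ≠ θ₃) (h24 : θ₂ ≠ θ₄) (h34 : θ₃ ≠ θ₄)
    (hAB : A ≠ B) (hcr : (C - A) / (B - A) = crossRatio θ₁ θ₂ θ₃ θ₄) :
    ∃ s t : ℂ, t ≠ θ₄ * s ∧ θ₄ * A + t = θ₃ * (A + s) ∧
      θ₄ * B + t = θ₂ * (B + s) ∧ θ₄ * C + t = θ₁ * (C + s) := by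
  have h32 : θ₃ - θ₂ ≠ 0 := sub_ne_zero.mpr (Ne.symm h23)
  have hBA : B - A ≠ 0 := sub_ne_zero.mpr (Ne.symm hAB)
  have hD : (θ₁ - θ₄) * (θ₂ - θ₃) ≠ 0 :=
    mul_ne_zero (sub_ne_zero.mpr h14) (sub_ne_zero.mpr h23)
  rw [crossRatio, div_eq_div_iff hBA hD] at hcr
  set s : ℂ := (θ₄ * (A - B) - θ₃ * A + θ₂ * B) / (θ₃ - θ₂) with hs
  refine ⟨s, θ₃ * (A + s) - θ₄ * A, ?_, by ring, ?_, ?_⟩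
  · have hAs : A + s = (θ₄ - θ₂) * (A - B) / (θ₃ - θ₂) := by
      rw [hs]; field_simp; ring
    intro h
    have h2 : (θ₃ - θ₄) * (A + s) = 0 := by linear_combination h
    rw [hAs] at h2
    exact mul_ne_zero (sub_ne_zero.mpr h34)
      (div_ne_zero (mul_ne_zero (sub_ne_zero.mpr (Ne.symm h24))
        (sub_ne_zero.mpr hAB)) h32) h2
  · rw [hs]; field_simp; ring
  · rw [hs]; field_simp
    linear_combination hcr

lemma exists_four (Θ : Set ℂ) (hcard : Θ.ncard = 4) :
    ∃ t₁ t₂ t₃ t₄ : ℂ, t₁ ≠ t₂ ∧ t₁ ≠ t₃ ∧ t₁ ≠ t₄ ∧ t₂ ≠ t₃ ∧ t₂ ≠ t₄ ∧ t₃ ≠ t₄ ∧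
      Θ = {t₁, t₂, t₃, t₄} := by
  have hfin : Θ.Finite := Set.finite_of_ncard_ne_zero (by omega)
  obtain ⟨t₁, ht₁⟩ := Set.nonempty_of_ncard_ne_zero (s := Θ) (by omega)
  have h3 : (Θ \ {t₁}).ncard = 3 := by
    have := Set.ncard_diff_singleton_add_one ht₁ hfin
    omega
  rw [Set.ncard_eq_three] at h3
  obtain ⟨x, y, z, hxy, hxz, hyz, hset⟩ := h3
  have hx : x ∈ Θ \ {t₁} := by rw [hset]; exact Or.inl rfl
  have hy : y ∈ Θ \ {t₁} := by rw [hset]; exact Or.inr (Or.inl rfl)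
  have hz : z ∈ Θ \ {t₁} := by rw [hset]; exact Or.inr (Or.inr rfl)
  refine ⟨t₁, x, y, z, fun h => hx.2 h.symm, fun h => hy.2 h.symm, fun h => hz.2 h.symm,
    hxy, hxz, hyz, ?_⟩
  have : Θ = insert t₁ (Θ \ {t₁}) := by
    rw [Set.insert_diff_singleton, Set.insert_eq_of_mem ht₁]
  rw [this, hset]

theorem stmt18 (a b c : ℂ) (Θ : Set ℂ) (hΘ : Θ ⊆ unitCircle) (hcard : Θ.ncard = 4) :
    ¬ DoesPR (Gabc a b c) Θ ↔
      a = b ∨ b = c ∨ a = c ∨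
      ∃ θ₁ θ₂ θ₃ θ₄ : ℂ, Θ = {θ₁, θ₂, θ₃, θ₄} ∧
        θ₁ ≠ θ₂ ∧ θ₁ ≠ θ₃ ∧ θ₁ ≠ θ₄ ∧ θ₂ ≠ θ₃ ∧ θ₂ ≠ θ₄ ∧ θ₃ ≠ θ₄ ∧
        (c - a) / (b - a) = starRingEnd ℂ (crossRatio θ₁ θ₂ θ₃ θ₄) := by
  have hfin : Θ.Finite := Set.finite_of_ncard_ne_zero (by omega)
  rw [notPR_iff]
  constructor
  · rintro ⟨α, hα, s, t, hts, hall⟩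
    by_cases hab : a = b
    · exact Or.inl hab
    by_cases hbc : b = c
    · exact Or.inr (Or.inl hbc)
    by_cases hac : a = c
    · exact Or.inr (Or.inr (Or.inl hac))
    right; right; right
    obtain ⟨θa, hθa, ha⟩ := hall a (Or.inl rfl)
    obtain ⟨θb, hθb, hb⟩ := hall b (Or.inr (Or.inl rfl))
    obtain ⟨θc, hθc, hc⟩ := hall c (Or.inr (Or.inr rfl))
    have hAB : starRingEnd ℂ a ≠ starRingEnd ℂ b := fun h => hab ((starRingEnd ℂ).injective h)
    have hAC : starRingEnd ℂ a ≠ starRingEnd ℂ c := fun h => hac ((starRingEnd ℂ).injective h)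
    have hBC : starRingEnd ℂ b ≠ starRingEnd ℂ c := fun h => hbc ((starRingEnd ℂ).injective h)
    obtain ⟨d1, d2, d3, d4, d5, d6, hcr⟩ :=
      cr_formula α s t (starRingEnd ℂ a) (starRingEnd ℂ b) (starRingEnd ℂ c) θa θb θc
        hts ha hb hc hAB hAC hBC
    refine ⟨θc, θb, θa, α, ?_, Ne.symm d6, Ne.symm d5, d3, Ne.symm d4, d2, d1, ?_⟩
    · have hsub : ({θc, θb, θa, α} : Set ℂ) ⊆ Θ := by
        rintro w (rfl | rfl | rfl | rfl) <;> assumption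
      have hn1 : α ∉ ({θa} : Set ℂ) := by
        simp only [Set.mem_singleton_iff]
        exact fun h => d1 h.symm
      have hn2 : θb ∉ ({θa, α} : Set ℂ) := by
        simp only [Set.mem_insert_iff, Set.mem_singleton_iff]
        push_neg
        exact ⟨Ne.symm d4, d2⟩
      have hn3 : θc ∉ ({θb, θa, α} : Set ℂ) := by
        simp only [Set.mem_insert_iff, Set.mem_singleton_iff]
        push_neg
        exact ⟨Ne.symm d6, Ne.symm d5, d3⟩
      have hn4 : ({θc, θb, θa, α} : Set ℂ).ncard = 4 := by
        rw [Set.ncard_insert_of_notMem hn3, Set.ncard_insert_of_notMem hn2,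
          Set.ncard_pair (fun h => d1 h)]
      exact (Set.eq_of_subset_of_ncard_le hsub (by rw [hn4, hcard]) hfin).symm
    · rw [hcr, map_div₀, map_sub, map_sub, Complex.conj_conj, Complex.conj_conj,
        Complex.conj_conj]
  · rintro (hab | hbc | hac | ⟨θ₁, θ₂, θ₃, θ₄, hΘeq, h12, h13, h14, h23, h24, h34, hcr⟩)
    · obtain ⟨t₁, t₂, t₃, t₄, d12, d13, d14, d23, d24, d34, hset⟩ := exists_four Θ hcard
      have ht₁ : t₁ ∈ Θ := by rw [hset]; exact Or.inl rfl
      have ht₂ : t₂ ∈ Θ := by rw [hset]; exact Or.inr (Or.inl rfl)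
      have ht₃ : t₃ ∈ Θ := by rw [hset]; exact Or.inr (Or.inr (Or.inl rfl))
      by_cases hAC : starRingEnd ℂ a = starRingEnd ℂ c
      · obtain ⟨s, t, h1, h2⟩ := construct_one t₁ t₂ (starRingEnd ℂ a) d12
        refine ⟨t₁, ht₁, s, t, h1, ?_⟩
        rintro x (rfl | rfl | rfl)
        · exact ⟨t₂, ht₂, h2⟩
        · refine ⟨t₂, ht₂, ?_⟩; rw [← hab]; exact h2
        · refine ⟨t₂, ht₂, ?_⟩; rw [← hAC]; exact h2
      · obtain ⟨s, t, h1, h2, h3⟩ :=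
          construct_two t₁ t₂ t₃ (starRingEnd ℂ a) (starRingEnd ℂ c) d12 d23 d13 hAC
        refine ⟨t₁, ht₁, s, t, h1, ?_⟩
        rintro x (rfl | rfl | rfl)
        · exact ⟨t₂, ht₂, h2⟩
        · refine ⟨t₂, ht₂, ?_⟩; rw [← hab]; exact h2
        · exact ⟨t₃, ht₃, h3⟩
    · obtain ⟨t₁, t₂, t₃, t₄, d12, d13, d14, d23, d24, d34, hset⟩ := exists_four Θ hcard
      have ht₁ : t₁ ∈ Θ := by rw [hset]; exact Or.inl rfl
      have ht₂ : t₂ ∈ Θ := by rw [hset]; exact Or.inr (Or.inl rfl)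
      have ht₃ : t₃ ∈ Θ := by rw [hset]; exact Or.inr (Or.inr (Or.inl rfl))
      by_cases hAB : starRingEnd ℂ a = starRingEnd ℂ b
      · obtain ⟨s, t, h1, h2⟩ := construct_one t₁ t₂ (starRingEnd ℂ a) d12
        refine ⟨t₁, ht₁, s, t, h1, ?_⟩
        rintro x (rfl | rfl | rfl)
        · exact ⟨t₂, ht₂, h2⟩
        · refine ⟨t₂, ht₂, ?_⟩; rw [← hAB]; exact h2
        · refine ⟨t₂, ht₂, ?_⟩; rw [← hbc, ← hAB]; exact h2
      · obtain ⟨s, t, h1, h2, h3⟩ :=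
          construct_two t₁ t₂ t₃ (starRingEnd ℂ a) (starRingEnd ℂ b) d12 d23 d13 hAB
        refine ⟨t₁, ht₁, s, t, h1, ?_⟩
        rintro x (rfl | rfl | rfl)
        · exact ⟨t₂, ht₂, h2⟩
        · exact ⟨t₃, ht₃, h3⟩
        · refine ⟨t₃, ht₃, ?_⟩; rw [← hbc]; exact h3
    · obtain ⟨t₁, t₂, t₃, t₄, d12, d13, d14, d23, d24, d34, hset⟩ := exists_four Θ hcard
      have ht₁ : t₁ ∈ Θ := by rw [hset]; exact Or.inl rfl
      have ht₂ : t₂ ∈ Θ := by rw [hset]; exact Or.inr (Or.inl rfl)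
      have ht₃ : t₃ ∈ Θ := by rw [hset]; exact Or.inr (Or.inr (Or.inl rfl))
      by_cases hAB : starRingEnd ℂ a = starRingEnd ℂ b
      · obtain ⟨s, t, h1, h2⟩ := construct_one t₁ t₂ (starRingEnd ℂ a) d12
        refine ⟨t₁, ht₁, s, t, h1, ?_⟩
        rintro x (rfl | rfl | rfl)
        · exact ⟨t₂, ht₂, h2⟩
        · refine ⟨t₂, ht₂, ?_⟩; rw [← hAB]; exact h2
        · refine ⟨t₂, ht₂, ?_⟩; rw [← hac]; exact h2
      · obtain ⟨s, t, h1, h2, h3⟩ :=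
          construct_two t₁ t₂ t₃ (starRingEnd ℂ a) (starRingEnd ℂ b) d12 d23 d13 hAB
        refine ⟨t₁, ht₁, s, t, h1, ?_⟩
        rintro x (rfl | rfl | rfl)
        · exact ⟨t₂, ht₂, h2⟩
        · exact ⟨t₃, ht₃, h3⟩
        · refine ⟨t₂, ht₂, ?_⟩; rw [← hac]; exact h2
    · have hCR0 : crossRatio θ₁ θ₂ θ₃ θ₄ ≠ 0 :=
        div_ne_zero (mul_ne_zero (sub_ne_zero.mpr h13) (sub_ne_zero.mpr h24))
          (mul_ne_zero (sub_ne_zero.mpr h14) (sub_ne_zero.mpr h23))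
      have hLHS : (c - a) / (b - a) ≠ 0 := by
        rw [hcr]
        simpa using hCR0
      have hba : b ≠ a := by
        intro h
        apply hLHS
        rw [h, sub_self, div_zero]
      have hAB : starRingEnd ℂ a ≠ starRingEnd ℂ b :=
        fun h => hba ((starRingEnd ℂ).injective h.symm)
      have hcr' : (starRingEnd ℂ c - starRingEnd ℂ a) / (starRingEnd ℂ b - starRingEnd ℂ a)
          = crossRatio θ₁ θ₂ θ₃ θ₄ := by
        have := congrArg (starRingEnd ℂ) hcr
        rwa [map_div₀, map_sub, map_sub, Complex.conj_conj] at this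
      obtain ⟨s, t, hts, e1, e2, e3⟩ :=
        construct_cr θ₁ θ₂ θ₃ θ₄ (starRingEnd ℂ a) (starRingEnd ℂ b) (starRingEnd ℂ c)
          h14 h23 h24 h34 hAB hcr'
      have hm : ∀ θ ∈ ({θ₁, θ₂, θ₃, θ₄} : Set ℂ), θ ∈ Θ := by rw [hΘeq]; exact fun θ h => h
      refine ⟨θ₄, hm θ₄ (Or.inr (Or.inr (Or.inr rfl))), s, t, hts, ?_⟩
      rintro x (rfl | rfl | rfl)
      · exact ⟨θ₃, hm θ₃ (Or.inr (Or.inr (Or.inl rfl))), e1⟩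
      · exact ⟨θ₂, hm θ₂ (Or.inr (Or.inl rfl)), e2⟩
      · exact ⟨θ₁, hm θ₁ (Or.inl rfl), e3⟩
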